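/- Left-tail CVaR admits the Rockafellar–Uryasev representation: CVaR_τ(X) = sup over v ∈ ℝ of (v − (1/τ)·E[(v − X)⁺]), where the supremum is attained at v = VaR_τ(X), for X with continuous CDF. -/

import Mathlib

open MeasureTheory

/-- Cumulative distribution function of `X` under `μ`. -/
noncomputable def cdf {Ω : Type*} [MeasurableSpace Ω] (μ : Measure Ω)
    (X : Ω → ℝ) (x : ℝ) : ℝ :=
  (μ {ω | X ω ≤ x}).toReal

/-- Value-at-risk: VaR_τ(X) = sup {x | F(x) ≤ τ}. -/
noncomputable def VaR {Ω : Type*} [MeasurableSpace Ω] (μ : Measure Ω)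
    (X : Ω → ℝ) (τ : ℝ) : ℝ :=
  sSup {x | cdf μ X x ≤ τ}

/-- Left-tail conditional value-at-risk: CVaR_τ(X) = E[X | X ≤ VaR_τ(X)]. -/
noncomputable def CVaR {Ω : Type*} [MeasurableSpace Ω] (μ : Measure Ω)
    (X : Ω → ℝ) (τ : ℝ) : ℝ :=
  (∫ ω in {ω | X ω ≤ VaR μ X τ}, X ω ∂μ) / (μ {ω | X ω ≤ VaR μ X τ}).toReal

/-- Rockafellar–Uryasev representation of left-tail CVaR:
CVaR_τ(X) = sup_{v ∈ ℝ} ( v − (1/τ)·E[(v − X)⁺] ), the supremum being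
attained at v = VaR_τ(X), for X with continuous CDF. -/
theorem cvar_rockafellar_uryasev {Ω : Type*} [MeasurableSpace Ω]
    (μ : Measure Ω) [IsProbabilityMeasure μ]
    (X : Ω → ℝ) (hX : Integrable X μ) (τ : ℝ) (hτ : τ ∈ Set.Ioo (0 : ℝ) 1)
    (hcont : Continuous (cdf μ X))
    (hpos : 0 < μ {ω | X ω ≤ VaR μ X τ}) :
    (VaR μ X τ - (1 / τ) * ∫ ω, max (VaR μ X τ - X ω) 0 ∂μ = CVaR μ X τ) ∧
    ∀ v : ℝ, v - (1 / τ) * ∫ ω, max (v - X ω) 0 ∂μ ≤ CVaR μ X τ := by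
  obtain ⟨hτ0, hτ1⟩ := hτ
  -- measurable representative
  set X' := hX.aestronglyMeasurable.mk X with hX'def
  have hX'm : Measurable X' := hX.aestronglyMeasurable.stronglyMeasurable_mk.measurable
  have hae : X =ᵐ[μ] X' := hX.aestronglyMeasurable.ae_eq_mk
  have hX'int : Integrable X' μ := hX.congr hae
  have hsetae : ∀ x : ℝ, {ω | X ω ≤ x} =ᵐ[μ] {ω | X' ω ≤ x} := by
    intro x
    filter_upwards [hae] with ω h
    show (X ω ≤ x) = (X' ω ≤ x)
    rw [h]
  have hμset : ∀ x : ℝ, μ {ω | X ω ≤ x} = μ {ω | X' ω ≤ x} := fun x =>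
    measure_congr (hsetae x)
  -- cdf μ X equals the mathlib cdf of the pushforward measure
  have hmap : IsProbabilityMeasure (μ.map X') := Measure.isProbabilityMeasure_map hX'm.aemeasurable
  have hcdf_eq : ∀ x : ℝ, cdf μ X x = ProbabilityTheory.cdf (μ.map X') x := by
    intro x
    rw [ProbabilityTheory.cdf_eq_real, measureReal_def, Measure.map_apply hX'm measurableSet_Iic]
    simp only [cdf, hμset x]
    rfl
  have hmono : Monotone (cdf μ X) := by
    intro a b hab
    simp only [hcdf_eq]
    exact ProbabilityTheory.monotone_cdf _ hab
  have htop : Filter.Tendsto (cdf μ X) Filter.atTop (nhds 1) := by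
    have := ProbabilityTheory.tendsto_cdf_atTop (μ.map X')
    exact this.congr fun x => (hcdf_eq x).symm
  have hbot : Filter.Tendsto (cdf μ X) Filter.atBot (nhds 0) := by
    have := ProbabilityTheory.tendsto_cdf_atBot (μ.map X')
    exact this.congr fun x => (hcdf_eq x).symm
  -- the set defining VaR
  set S : Set ℝ := {x | cdf μ X x ≤ τ} with hSdef
  have hSne : S.Nonempty := by
    have : ∀ᶠ x in Filter.atBot, cdf μ X x < τ := hbot.eventually_lt_const hτ0
    obtain ⟨x, hx⟩ := this.exists
    exact ⟨x, le_of_lt hx⟩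
  have hSbdd : BddAbove S := by
    have : ∀ᶠ x in Filter.atTop, τ < cdf μ X x := htop.eventually_const_lt hτ1
    obtain ⟨M, hM⟩ := Filter.eventually_atTop.1 this
    refine ⟨M, fun x hx => ?_⟩
    by_contra h
    exact absurd (hM x (le_of_not_ge h)) (not_lt.2 hx)
  have hSclosed : IsClosed S := IsClosed.preimage hcont isClosed_Iic
  set v₀ : ℝ := VaR μ X τ with hv₀def
  have hv₀mem : v₀ ∈ S := hSclosed.csSup_mem hSne hSbdd
  have hFv₀_le : cdf μ X v₀ ≤ τ := hv₀mem
  have hFv₀_ge : τ ≤ cdf μ X v₀ := by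
    have htend : Filter.Tendsto (cdf μ X) (nhdsWithin v₀ (Set.Ioi v₀)) (nhds (cdf μ X v₀)) :=
      (hcont.continuousAt).continuousWithinAt
    refine ge_of_tendsto htend ?_
    filter_upwards [self_mem_nhdsWithin] with x hx
    by_contra h
    have : x ∈ S := le_of_lt (lt_of_not_ge h)
    exact absurd (le_csSup hSbdd this) (not_le.2 hx)
  have hFv₀ : cdf μ X v₀ = τ := le_antisymm hFv₀_le hFv₀_ge
  -- the tail set
  set A : Set Ω := {ω | X' ω ≤ v₀} with hAdef
  have hAmeas : MeasurableSet A := hX'm measurableSet_Iic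
  have hμA : (μ A).toReal = τ := by
    rw [← hμset v₀]
    exact hFv₀
  -- rewrite CVaR
  have hIeq : ∫ ω in {ω | X ω ≤ v₀}, X ω ∂μ = ∫ ω in A, X' ω ∂μ := by
    rw [setIntegral_congr_set (hsetae v₀)]
    exact integral_congr_ae (ae_restrict_of_ae hae)
  set I : ℝ := ∫ ω in A, X' ω ∂μ with hIdef
  have hCVaR : CVaR μ X τ = I / τ := by
    rw [CVaR, ← hv₀def, hIeq, hμset v₀, ← hAdef, hμA]
  -- key integral computation: for any v, ∫ over A of (v - X') = v*τ - I
  have hconst : ∀ v : ℝ, ∫ ω in A, (v - X' ω) ∂μ = v * τ - I := by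
    intro v
    rw [integral_sub (integrable_const v).restrict hX'int.restrict, setIntegral_const,
      smul_eq_mul, measureReal_def, hμA, mul_comm]
  -- equality part: max (v₀ - X) 0 = indicator of A of (v₀ - X') a.e.
  have hmax_eq : ∫ ω, max (v₀ - X ω) 0 ∂μ = v₀ * τ - I := by
    have h1 : ∫ ω, max (v₀ - X ω) 0 ∂μ = ∫ ω, A.indicator (fun ω => v₀ - X' ω) ω ∂μ := by
      refine integral_congr_ae ?_
      filter_upwards [hae] with ω h
      rw [h, Set.indicator_apply]
      by_cases hA : ω ∈ A
      · rw [if_pos hA]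
        exact max_eq_left (sub_nonneg.2 hA)
      · rw [if_neg hA]
        have : v₀ < X' ω := lt_of_not_ge hA
        exact max_eq_right (by linarith)
    rw [h1, integral_indicator hAmeas, hconst]
  -- inequality part: ∫ max (v - X) 0 ≥ v*τ - I
  have hmax_ge : ∀ v : ℝ, v * τ - I ≤ ∫ ω, max (v - X ω) 0 ∂μ := by
    intro v
    have hint1 : Integrable (fun ω => max (v - X ω) 0) μ :=
      ((integrable_const v).sub hX).pos_part
    have hint2 : Integrable (fun ω => A.indicator (fun ω => v - X' ω) ω) μ :=
      ((integrable_const v).sub hX'int).indicator hAmeas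
    have hle : ∫ ω, A.indicator (fun ω => v - X' ω) ω ∂μ ≤ ∫ ω, max (v - X ω) 0 ∂μ := by
      refine integral_mono_ae hint2 hint1 ?_
      filter_upwards [hae] with ω h
      rw [Set.indicator_apply]
      by_cases hA : ω ∈ A
      · rw [if_pos hA, h]
        exact le_max_left _ _
      · rw [if_neg hA]
        exact le_max_right _ _
    rw [integral_indicator hAmeas, hconst] at hle
    exact hle
  constructor
  · rw [hCVaR, hmax_eq]
    field_simp
    ring
  · intro v
    rw [hCVaR]
    have := hmax_ge v
    rw [div_eq_mul_inv, ← sub_nonneg]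
    have hτ0' : (0:ℝ) < τ⁻¹ := inv_pos.2 hτ0
    have : 0 ≤ (I - (v * τ - ∫ ω, max (v - X ω) 0 ∂μ)) * τ⁻¹ :=
      mul_nonneg (by linarith) (le_of_lt hτ0')
    calc (0:ℝ) ≤ (I - (v * τ - ∫ ω, max (v - X ω) 0 ∂μ)) * τ⁻¹ := this
      _ = I * τ⁻¹ - (v - 1 / τ * ∫ ω, max (v - X ω) 0 ∂μ) := by
          field_simp
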